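/- Let X be a compact Hausdorff space, R a proper equivalence relation on X (i.e. the quotient X/R is Hausdorff) which is open (the saturation of each open set is open), and h : X → ℝ continuous. Then the set M_h^R of conditional minimum points of h, i.e. the set of x ∈ X such that h(x) ≤ h(y) for all y with (x,y) ∈ R, is closed in X. -/

import Mathlib

/-- If `R` is an open proper equivalence relation on a compact
Hausdorff space `X` (the quotient is Hausdorff and the quotient map is open)
and `h : X → ℝ` is continuous, then the set of conditional minimum points
`M_h^R = {x | ∀ y, x ~ y → h x ≤ h y}` is closed. -/
theorem stmt1 {X : Type*} [TopologicalSpace X] [CompactSpace X]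
    (s : Setoid X)
    (hHausdorff : T2Space (Quotient s))
    (hopen : IsOpenMap (Quotient.mk s))
    (h : X → ℝ) (hcont : Continuous h) :
    IsClosed {x : X | ∀ y : X, s.r x y → h x ≤ h y} := by
  rw [← isOpen_compl_iff, isOpen_iff_forall_mem_open]
  intro x hx
  simp only [Set.mem_compl_iff, Set.mem_setOf_eq, not_forall] at hx
  obtain ⟨y, hxy, hlt⟩ := hx
  push_neg at hlt
  obtain ⟨c, hc1, hc2⟩ := exists_between hlt
  refine ⟨(Quotient.mk s) ⁻¹' (Quotient.mk s '' (h ⁻¹' Set.Iio c)) ∩ h ⁻¹' Set.Ioi c,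
    ?_, ?_, ?_, ?_⟩
  · rintro z ⟨hz1, hz2⟩
    obtain ⟨w, hw, hweq⟩ := hz1
    simp only [Set.mem_compl_iff, Set.mem_setOf_eq, not_forall]
    refine ⟨w, Quotient.eq''.mp hweq.symm, not_le.mpr ?_⟩
    exact lt_trans hw hz2
  · exact (hopen _ (hcont.isOpen_preimage _ isOpen_Iio)).preimage continuous_quotient_mk' |>.inter
      (hcont.isOpen_preimage _ isOpen_Ioi)
  · exact ⟨y, hc1, (Quotient.sound hxy).symm⟩
  · exact hc2
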